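/- Let A be an algebraic curvature tensor on a nondegenerate inner product space V and let rho be its Ricci operator. If rho^2 = -s^2 · id with s ≠ 0 and A(rho x, y, z, rho w) = -s^2 A(x,y,z,w) for all x,y,z,w in V, then A(rho x, y, z, w) = A(x, y, z, rho w) for all x,y,z,w in V, and hence rho commutes with all Jacobi operators of A. -/

import Mathlib

/-- Let `A` be an algebraic curvature tensor with Ricci operator
`rho`. If `rho² = -s²·id` with `s ≠ 0` and `A(rho x, y, z, rho w) = -s² A(x,y,z,w)`
for all vectors, then `A(rho x, y, z, w) = A(x, y, z, rho w)` for all vectors, and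
`rho` commutes with all Jacobi operators of `A`. -/
theorem stmt_8 {V : Type*} [AddCommGroup V] [Module ℝ V] [FiniteDimensional ℝ V]
    (B : LinearMap.BilinForm ℝ V) (hBsymm : ∀ x y, B x y = B y x)
    (hBnd : B.Nondegenerate)
    (A : V →ₗ[ℝ] V →ₗ[ℝ] V →ₗ[ℝ] V →ₗ[ℝ] ℝ)
    (hpair : ∀ x y z w, A x y z w = A z w x y)
    (hanti : ∀ x y z w, A x y z w = -A y x z w)
    (hbianchi : ∀ x y z w, A x y z w + A y z x w + A z x y w = 0)
    (Rop : V →ₗ[ℝ] V →ₗ[ℝ] V →ₗ[ℝ] V)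
    (hRop : ∀ x y z w, B (Rop x y z) w = A x y z w)
    (Jop : V → V →ₗ[ℝ] V)
    (hJop : ∀ x y, Jop x y = Rop y x x)
    (rho : V →ₗ[ℝ] V) (hrho_sa : ∀ x y, B (rho x) y = B x (rho y))
    (hrho : ∀ x y, B (rho x) y = LinearMap.trace ℝ V ((Rop.flip x).flip y))
    (s : ℝ) (hs : s ≠ 0)
    (hsq : ∀ x, rho (rho x) = -(s ^ 2) • x)
    (h : ∀ x y z w, A (rho x) y z (rho w) = -(s ^ 2) * A x y z w) :
    (∀ x y z w, A (rho x) y z w = A x y z (rho w)) ∧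
    (∀ x, rho ∘ₗ Jop x = Jop x ∘ₗ rho) := by
  have hs2 : (-(s ^ 2) : ℝ) ≠ 0 := by
    simpa using pow_ne_zero 2 hs
  have h1 : ∀ x y z w, A (rho x) y z w = A x y z (rho w) := by
    intro x y z w
    have h2 := h (rho x) y z w
    rw [hsq] at h2
    simp only [map_neg, map_smul, LinearMap.neg_apply, LinearMap.smul_apply,
      smul_eq_mul, neg_mul] at h2
    have : -(s ^ 2) * A x y z (rho w) = -(s ^ 2) * A (rho x) y z w := by
      rw [neg_mul, neg_mul]; linarith
    exact (mul_left_cancel₀ hs2 this).symm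
  refine ⟨h1, fun x => ?_⟩
  ext y
  simp only [LinearMap.comp_apply, hJop]
  have key : ∀ z, B (rho (Rop y x x) - Rop (rho y) x x) z = 0 := by
    intro z
    rw [map_sub, LinearMap.sub_apply, hrho_sa, hRop, hRop, ← h1]
    ring
  have h0 := hBnd.1 _ key
  exact sub_eq_zero.mp h0
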